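/- For n > 1 and d ≥ 1, the set M of n×d real matrices having at least one row with pairwise distinct entries is path-connected. -/

import Mathlib

lemma seg_joinedIn {E : Type*} [AddCommGroup E] [Module ℝ E] [TopologicalSpace E]
    [IsTopologicalAddGroup E] [ContinuousSMul ℝ E] (S : Set E) (x y : E)
    (h : ∀ t : ℝ, (1 - t) • x + t • y ∈ S) : JoinedIn S x y := by
  refine ⟨⟨⟨fun t => (1 - (t : ℝ)) • x + (t : ℝ) • y, by fun_prop⟩, by simp, by simp⟩,
    fun t => h t⟩

theorem good_set_pathConnected (n d : ℕ) (hn : 2 ≤ n) (hd : 1 ≤ d)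
    (M : Set (Matrix (Fin n) (Fin d) ℝ))
    (hM : M = {A | ∃ ℓ : Fin n, ∀ i j : Fin d, i ≠ j → A ℓ i ≠ A ℓ j}) :
    IsPathConnected M := by
  subst hM
  set B : Matrix (Fin n) (Fin d) ℝ := fun _ j => (j : ℝ) with hB
  have hBrow : ∀ k : Fin n, ∀ i j : Fin d, i ≠ j → B k i ≠ B k j := by
    intro k i j hij
    simp only [hB]
    intro h
    exact hij (Fin.ext (by exact_mod_cast h))
  refine ⟨B, ⟨⟨0, by omega⟩, hBrow ⟨0, by omega⟩⟩, ?_⟩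
  rintro A ⟨ℓ, hℓ⟩
  -- intermediate matrix: row ℓ of A, other rows from B
  set C : Matrix (Fin n) (Fin d) ℝ := fun i j => if i = ℓ then A ℓ j else B i j with hC
  have h1 : JoinedIn {A | ∃ ℓ : Fin n, ∀ i j : Fin d, i ≠ j → A ℓ i ≠ A ℓ j} B C := by
    obtain ⟨k, hk⟩ : ∃ k : Fin n, k ≠ ℓ :=
      Fintype.exists_ne_of_one_lt_card (by simp; omega) ℓ
    refine seg_joinedIn _ _ _ (fun t => ⟨k, fun i j hij => ?_⟩)
    have : C k = B k := by funext j; simp [hC, hk]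
    simp only [Matrix.add_apply, Matrix.smul_apply, this, smul_eq_mul]
    intro h
    have : B k i = B k j := by linarith
    exact hBrow k i j hij this
  have h2 : JoinedIn {A | ∃ ℓ : Fin n, ∀ i j : Fin d, i ≠ j → A ℓ i ≠ A ℓ j} C A := by
    refine seg_joinedIn _ _ _ (fun t => ⟨ℓ, fun i j hij => ?_⟩)
    have hCℓ : ∀ j, C ℓ j = A ℓ j := fun j => by simp [hC]
    simp only [Matrix.add_apply, Matrix.smul_apply, hCℓ, smul_eq_mul]
    intro h
    have : A ℓ i = A ℓ j := by linarith
    exact hℓ i j hij this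
  exact h1.trans h2
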